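/- Let G be a P5-free graph, let v be a vertex, let u ∈ N_G(v), and let C be a connected component of G \ (N_G(u) ∪ N_G(v)). Then every vertex z ∈ N_G(v) \ N_G(u) is either complete or anticomplete to V(C). -/

import Mathlib

open SimpleGraph

/-- A graph is `P5`-free if it has no induced subgraph isomorphic to the five-vertex path. -/
def P5Free {V : Type*} (G : SimpleGraph V) : Prop :=
  IsEmpty (SimpleGraph.pathGraph 5 ↪g G)

lemma mix_edge {V : Type*} {C : Set V} (G : SimpleGraph V) (P : V → Prop) :
    ∀ {x y : C} (_ : (G.induce C).Walk x y), P x → ¬ P y →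
      ∃ a b : C, G.Adj a b ∧ P a ∧ ¬ P b := by
  intro x y w
  induction w with
  | nil => intro h h'; exact absurd h h'
  | @cons x' x'' y' h p ih =>
    intro hx hy
    by_cases hx'' : P x''
    · exact ih hx'' hy
    · exact ⟨x', x'', h, hx, hx''⟩

theorem stmt_14 {V : Type*} (G : SimpleGraph V) (hP5 : P5Free G)
    (v u : V) (hu : u ∈ G.neighborSet v)
    (C : Set V)
    (hCsub : C ⊆ (G.neighborSet u ∪ G.neighborSet v)ᶜ)
    (hCconn : (G.induce C).Connected)
    (hCcomp : ∀ a ∈ C, ∀ b ∈ (G.neighborSet u ∪ G.neighborSet v)ᶜ, b ∉ C → ¬ G.Adj a b)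
    (z : V) (hz : z ∈ G.neighborSet v \ G.neighborSet u) :
    (∀ c ∈ C, G.Adj z c) ∨ (∀ c ∈ C, ¬ G.Adj z c) := by
  by_contra hcon
  push_neg at hcon
  obtain ⟨⟨c2, hc2C, hc2⟩, ⟨c1, hc1C, hc1⟩⟩ := hcon
  obtain ⟨w⟩ := hCconn.preconnected ⟨c1, hc1C⟩ ⟨c2, hc2C⟩
  obtain ⟨⟨a, haC⟩, ⟨b, hbC⟩, hab, hza0, hzb0⟩ :=
    mix_edge G (fun x => G.Adj z x) w hc1 hc2
  simp only [comap_adj, Function.Embedding.coe_subtype] at hab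
  have hza : G.Adj z a := hza0
  have hzb : ¬ G.Adj z b := hzb0
  -- basic facts
  have hvz : G.Adj v z := hz.1
  have hzu : ¬ G.Adj u z := hz.2
  have hvu : G.Adj v u := hu
  have ha := hCsub haC
  have hb := hCsub hbC
  simp only [Set.mem_compl_iff, Set.mem_union, mem_neighborSet, not_or] at ha hb
  have hua : ¬ G.Adj u a := ha.1
  have hva : ¬ G.Adj v a := ha.2
  have hub : ¬ G.Adj u b := hb.1
  have hvb : ¬ G.Adj v b := hb.2
  -- distinctness
  have huv : u ≠ v := hvu.symm.ne
  have huz : u ≠ z := fun h => hua (h ▸ hza)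
  have hua' : u ≠ a := fun h => hva (h ▸ hvu)
  have hub' : u ≠ b := fun h => hvb (h ▸ hvu)
  have hvz' : v ≠ z := hvz.ne
  have hva' : v ≠ a := fun h => hua (h ▸ hvu.symm)
  have hvb' : v ≠ b := fun h => hub (h ▸ hvu.symm)
  have hza' : z ≠ a := hza.ne
  have hzb' : z ≠ b := fun h => hvb (h ▸ hvz)
  have hab' : a ≠ b := hab.ne
  have hzu2 : ¬ G.Adj z u := fun h => hzu h.symm
  have hau : ¬ G.Adj a u := fun h => hua h.symm
  have hav : ¬ G.Adj a v := fun h => hva h.symm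
  have hbu : ¬ G.Adj b u := fun h => hub h.symm
  have hbv : ¬ G.Adj b v := fun h => hvb h.symm
  have hbz : ¬ G.Adj b z := fun h => hzb h.symm
  -- build the P5 embedding u - v - z - a - b
  refine hP5.false ⟨⟨![u, v, z, a, b], ?_⟩, ?_⟩
  · intro i j hij
    fin_cases i <;> fin_cases j <;>
      simp_all <;>
      first
        | rfl
        | (exact absurd hij.symm (by assumption))
        | (exact absurd hij (by assumption))
  · intro i j
    show G.Adj (![u, v, z, a, b] i) (![u, v, z, a, b] j) ↔ _
    fin_cases i <;> fin_cases j <;>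
      simp [pathGraph_adj, hvu.symm, hvu, hvz, hvz.symm, hza, hza.symm, hab, hab.symm,
        hzu, hua, hub, hva, hvb, hzb, hzu2, hau, hav, hbu, hbv, hbz, G.irrefl, Fin.ext_iff] <;>
      first | rfl | decide | omega | skip
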